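/- Let 𝔠⁺ denote the cardinal successor of the cardinality of the continuum, identified with the set of ordinals below it, and let X = (𝔠⁺ × ℤ) ∪ {∞} where ∞ ∉ 𝔠⁺ × ℤ. Topologize X by declaring as a subbase all sets S_{α,n} = {(β,k) : α ≤ β and n ≤ k} for (α,n) ∈ 𝔠⁺ × ℤ and all sets T_α = {(β,k) : α ≤ β, k ∈ ℤ} ∪ {∞} for α ∈ 𝔠⁺. Then X is a T₀ topological space that is not core compact (it fails core compactness at the point ∞). -/

import Mathlib

open TopologicalSpace
/-- A topological space is *core compact* if for every point `x` and open set `U ∋ x`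
there is an open `V ∋ x` such that every open cover of `U` has a finite subfamily
covering `V`. -/
def CoreCompact (Y : Type*) [TopologicalSpace Y] : Prop :=
  ∀ (x : Y) (U : Set Y), IsOpen U → x ∈ U →
    ∃ V : Set Y, IsOpen V ∧ x ∈ V ∧
      ∀ 𝒰 : Set (Set Y), (∀ W ∈ 𝒰, IsOpen W) → U ⊆ ⋃₀ 𝒰 →
        ∃ F : Finset (Set Y), ↑F ⊆ 𝒰 ∧ V ⊆ ⋃₀ ↑F


/-- A topological space is *core compact at* a point `x` if for every open `U ∋ x`
there is an open `V ∋ x` such that every open cover of `U` has a finite subfamily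
covering `V`. -/
def CoreCompactAt (Y : Type*) [TopologicalSpace Y] (x : Y) : Prop :=
  ∀ U : Set Y, IsOpen U → x ∈ U →
    ∃ V : Set Y, IsOpen V ∧ x ∈ V ∧
      ∀ 𝒰 : Set (Set Y), (∀ W ∈ 𝒰, IsOpen W) → U ⊆ ⋃₀ 𝒰 →
        ∃ F : Finset (Set Y), ↑F ⊆ 𝒰 ∧ V ⊆ ⋃₀ ↑F

/-- The set of ordinals below `𝔠⁺`, the cardinal successor of the continuum. -/
abbrev CPlus : Type 1 := ↥(Set.Iio ((Order.succ Cardinal.continuum).ord))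

/-- The underlying set `X = (𝔠⁺ × ℤ) ∪ {∞}`, with `none` playing the role of `∞`. -/
abbrev JSpace : Type 1 := Option (CPlus × ℤ)

/-- The subbasic open set `S_{α,n} = {(β,k) : α ≤ β and n ≤ k}`. -/
def Ssub (α : CPlus) (n : ℤ) : Set JSpace :=
  {x | ∃ (β : CPlus) (k : ℤ), x = some (β, k) ∧ (α : Ordinal) ≤ (β : Ordinal) ∧ n ≤ k}

/-- The subbasic open set `T_α = {(β,k) : α ≤ β, k ∈ ℤ} ∪ {∞}`. -/
def Tsub (α : CPlus) : Set JSpace :=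
  {x | x = none ∨ ∃ (β : CPlus) (k : ℤ), x = some (β, k) ∧ (α : Ordinal) ≤ (β : Ordinal)}

/-- The topology on `X` generated by the subbase of all the sets `S_{α,n}` and `T_α`. -/
def jTop : TopologicalSpace JSpace :=
  TopologicalSpace.generateFrom
    ((Set.range fun p : CPlus × ℤ => Ssub p.1 p.2) ∪ Set.range Tsub)

lemma cplus_limit : Order.IsSuccLimit ((Order.succ Cardinal.continuum).ord) :=
  Cardinal.isSuccLimit_ord (le_trans Cardinal.aleph0_le_continuum (Order.le_succ _))

def czero : CPlus := ⟨0, cplus_limit.bot_lt⟩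

def csucc (α : CPlus) : CPlus := ⟨Order.succ α.1, cplus_limit.succ_lt α.2⟩

lemma mem_Ssub {β : CPlus} {k : ℤ} {α : CPlus} {n : ℤ} :
    (some (β, k) : JSpace) ∈ Ssub α n ↔ (α : Ordinal) ≤ (β : Ordinal) ∧ n ≤ k := by
  constructor
  · rintro ⟨β', k', h, h1, h2⟩
    obtain ⟨rfl, rfl⟩ : β = β' ∧ k = k' := by simpa [Prod.ext_iff] using h
    exact ⟨h1, h2⟩
  · rintro ⟨h1, h2⟩; exact ⟨β, k, rfl, h1, h2⟩

lemma none_not_mem_Ssub {α : CPlus} {n : ℤ} : (none : JSpace) ∉ Ssub α n := by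
  rintro ⟨β, k, h, -⟩; simp at h

lemma none_mem_Tsub {α : CPlus} : (none : JSpace) ∈ Tsub α := Or.inl rfl

lemma some_mem_Tsub {β : CPlus} {k : ℤ} {α : CPlus} :
    (some (β, k) : JSpace) ∈ Tsub α ↔ (α : Ordinal) ≤ (β : Ordinal) := by
  constructor
  · rintro (h | ⟨β', k', h, h1⟩)
    · simp at h
    · obtain ⟨rfl, rfl⟩ : β = β' ∧ k = k' := by simpa [Prod.ext_iff] using h
      exact h1
  · intro h; exact Or.inr ⟨β, k, rfl, h⟩

lemma Tsub_mono {α γ : CPlus} (h : (α : Ordinal) ≤ (γ : Ordinal)) : Tsub γ ⊆ Tsub α := by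
  rintro x (rfl | ⟨β, k, rfl, h1⟩)
  · exact Or.inl rfl
  · exact Or.inr ⟨β, k, rfl, le_trans h h1⟩

lemma isOpen_Ssub (α : CPlus) (n : ℤ) : jTop.IsOpen (Ssub α n) :=
  TopologicalSpace.GenerateOpen.basic _ (Or.inl ⟨(α, n), rfl⟩)

lemma isOpen_Tsub (α : CPlus) : jTop.IsOpen (Tsub α) :=
  TopologicalSpace.GenerateOpen.basic _ (Or.inr ⟨α, rfl⟩)

lemma exists_Tsub_subset {V : Set JSpace} (hV : jTop.IsOpen V) :
    none ∈ V → ∃ α : CPlus, Tsub α ⊆ V := by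
  change TopologicalSpace.GenerateOpen _ V at hV
  induction hV with
  | basic s hs =>
    intro h
    rcases hs with ⟨p, rfl⟩ | ⟨α, rfl⟩
    · exact absurd h none_not_mem_Ssub
    · exact ⟨α, subset_rfl⟩
  | univ => exact fun _ => ⟨czero, fun x _ => trivial⟩
  | inter s t hs ht ihs iht =>
    rintro ⟨h1, h2⟩
    obtain ⟨α, hα⟩ := ihs h1
    obtain ⟨γ, hγ⟩ := iht h2
    refine ⟨⟨max α.1 γ.1, max_lt (Set.mem_Iio.1 α.2) (Set.mem_Iio.1 γ.2)⟩, fun x hx => ?_⟩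
    exact ⟨hα (Tsub_mono (le_max_left _ _) hx), hγ (Tsub_mono (le_max_right _ _) hx)⟩
  | sUnion S hS ih =>
    rintro ⟨s, hs, hx⟩
    obtain ⟨α, hα⟩ := ih s hs hx
    exact ⟨α, hα.trans (Set.subset_sUnion_of_mem hs)⟩

lemma not_coreCompactAt_infty : ¬ @CoreCompactAt JSpace jTop (none : JSpace) := by
  letI : TopologicalSpace JSpace := jTop
  intro h
  obtain ⟨V, hVopen, hVmem, hV⟩ := h Set.univ isOpen_univ (Set.mem_univ _)
  obtain ⟨α₀, hα₀⟩ := exists_Tsub_subset hVopen hVmem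
  set 𝒰 : Set (Set JSpace) :=
    insert (Tsub (csucc α₀)) (Set.range fun n : ℤ => Ssub czero n) with h𝒰
  have hopen : ∀ W ∈ 𝒰, IsOpen W := by
    rintro W (rfl | ⟨n, rfl⟩)
    · exact isOpen_Tsub _
    · exact isOpen_Ssub _ _
  have hcover : Set.univ ⊆ ⋃₀ 𝒰 := by
    rintro (_ | ⟨β, k⟩) -
    · exact ⟨Tsub (csucc α₀), Or.inl rfl, none_mem_Tsub⟩
    · exact ⟨Ssub czero k, Or.inr ⟨k, rfl⟩, mem_Ssub.2 ⟨zero_le, le_refl _⟩⟩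
  obtain ⟨F, hF𝒰, hFV⟩ := hV 𝒰 hopen hcover
  have hinj : Function.Injective (fun n : ℤ => Ssub czero n) := by
    intro n n' hnn
    have h1 : (some (czero, n) : JSpace) ∈ Ssub czero n := mem_Ssub.2 ⟨le_refl _, le_refl _⟩
    have h2 : (some (czero, n') : JSpace) ∈ Ssub czero n' := mem_Ssub.2 ⟨le_refl _, le_refl _⟩
    simp only at hnn; rw [hnn] at h1; rw [← hnn] at h2
    exact le_antisymm (mem_Ssub.1 h2).2 (mem_Ssub.1 h1).2
  have hfin : {n : ℤ | Ssub czero n ∈ F}.Finite :=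
    F.finite_toSet.preimage hinj.injOn
  obtain ⟨m, hm⟩ := hfin.bddBelow
  have hp : (some (α₀, m - 1) : JSpace) ∈ V := hα₀ (some_mem_Tsub.2 (le_refl _))
  obtain ⟨s, hsF, hps⟩ := hFV hp
  rcases hF𝒰 hsF with rfl | ⟨n, rfl⟩
  · have : (csucc α₀ : Ordinal) ≤ (α₀ : Ordinal) := some_mem_Tsub.1 hps
    exact absurd this (not_le.2 (Order.lt_succ _))
  · have h1 : n ≤ m - 1 := (mem_Ssub.1 hps).2
    have h2 : m ≤ n := hm (show n ∈ {n : ℤ | Ssub czero n ∈ F} from hsF)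
    omega

lemma t0_jspace : @T0Space JSpace jTop := by
  letI : TopologicalSpace JSpace := jTop
  refine ⟨fun x y h => ?_⟩
  rw [inseparable_iff_forall_isOpen] at h
  match x, y with
  | none, none => rfl
  | none, some (β, k) =>
    have := (h (Tsub (csucc β)) (isOpen_Tsub _)).1 none_mem_Tsub
    exact absurd (some_mem_Tsub.1 this) (not_le.2 (Order.lt_succ _))
  | some (β, k), none =>
    have := (h (Tsub (csucc β)) (isOpen_Tsub _)).2 none_mem_Tsub
    exact absurd (some_mem_Tsub.1 this) (not_le.2 (Order.lt_succ _))
  | some (β, k), some (β', k') =>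
    have h1 := mem_Ssub.1 ((h (Ssub β k) (isOpen_Ssub _ _)).1 (mem_Ssub.2 ⟨le_refl _, le_refl _⟩))
    have h2 := mem_Ssub.1 ((h (Ssub β' k') (isOpen_Ssub _ _)).2 (mem_Ssub.2 ⟨le_refl _, le_refl _⟩))
    have hβ : β = β' := Subtype.ext (le_antisymm h1.1 h2.1)
    have hk : k = k' := le_antisymm h1.2 h2.2
    rw [hβ, hk]

theorem jSpace_t0_not_coreCompact :
    @T0Space JSpace jTop ∧
      ¬ @CoreCompactAt JSpace jTop (none : JSpace) ∧
      ¬ @CoreCompact JSpace jTop := by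
  refine ⟨t0_jspace, not_coreCompactAt_infty, fun h => not_coreCompactAt_infty ?_⟩
  exact fun U hU hx => h none U hU hx
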